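/- Let N be a single-sink network, v a node with outgoing edges vw_1, …, vw_p, and f a feasible flow over time such that on an interval [θ1, θ̂): the total outflow Σ_{i=1}^p f⁺_{vw_i}(ζ) from v is constant; each f⁺_{vw_i} is right-constant and piecewise constant with finitely many pieces; each label function ℓ_{w_i} is affine; and f⁺_{vw_i}(ζ) > 0 implies h_i(ζ) = min_j h_j(ζ), where h_i(ζ) := τ_{vw_i} + q_{vw_i}(ζ)/ν_{vw_i} + ℓ_{w_i}(ζ). Set ℓ_v := min_i h_i and I(θ) := {i : h_i(θ) = ℓ_v(θ)}. Then the functions h_i and ℓ_v are continuous and piecewise linear on [θ1, θ̂), possessing one-sided derivatives everywhere in (θ1, θ̂), and for every θ ∈ (θ1, θ̂): (1) min{∂⁻h_i(θ) : i ∈ I(θ)} ≤ ∂⁺ℓ_v(θ); and (2) if moreover every edge vw_i that is active immediately after θ (i.e. i ∈ I(θ) with ∂⁺h_i(θ) = ∂⁺ℓ_v(θ)) was also active immediately before θ (i.e. h_i = ℓ_v on some left neighbourhood of θ), then ∂⁻ℓ_v(θ) ≤ ∂⁺ℓ_v(θ). -/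

import Mathlib

open MeasureTheory Set

/-- A walk in a directed graph given by `tail`/`head` maps: `IsWalk tail head v w L`
means the list of edges `L` forms a walk from `v` to `w`. -/
def IsWalk {V E : Type} (tail head : E → V) : V → V → List E → Prop
  | v, w, [] => v = w
  | v, w, e :: L => tail e = v ∧ IsWalk tail head (head e) w L

/-- A right-constant step function with finitely many jump points. -/
def RightConstantStep (g : ℝ → ℝ) : Prop :=
  ∃ s : Finset ℝ, ∀ x y : ℝ, x ≤ y → (∀ p ∈ s, ¬ (x < p ∧ p ≤ y)) → g x = g y

/-- A single-sink network: a finite directed graph with positive rational capacities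
and travel times, a sink reachable from every node, and nonnegative rational-valued
right-constant step network inflow rates (zero at the sink and for negative times). -/
structure Network (V E : Type) [Fintype V] [DecidableEq V] [Fintype E] [DecidableEq E] where
  tail : E → V
  head : E → V
  cap : E → ℝ
  time : E → ℝ
  sink : V
  u : V → ℝ → ℝ
  cap_pos : ∀ e, 0 < cap e
  cap_rat : ∀ e, ∃ q : ℚ, cap e = (q : ℝ)
  time_pos : ∀ e, 0 < time e
  time_rat : ∀ e, ∃ q : ℚ, time e = (q : ℝ)
  reach : ∀ v, ∃ L : List E, IsWalk tail head v sink L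
  u_nonneg : ∀ v θ, 0 ≤ u v θ
  u_rat : ∀ v θ, ∃ q : ℚ, u v θ = (q : ℝ)
  u_sink : ∀ θ, u sink θ = 0
  u_neg : ∀ v θ, θ < 0 → u v θ = 0
  u_step : ∀ v, RightConstantStep (u v)

variable {V E : Type} [Fintype V] [DecidableEq V] [Fintype E] [DecidableEq E]

/-- The edges leaving a node `v`, i.e. `δ⁺(v)`. -/
def Network.outEdges (N : Network V E) (v : V) : Finset E :=
  Finset.univ.filter (fun e => N.tail e = v)

/-- The edges entering a node `v`, i.e. `δ⁻(v)`. -/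
def Network.inEdges (N : Network V E) (v : V) : Finset E :=
  Finset.univ.filter (fun e => N.head e = v)

/-- `τ_min`, the minimal travel time of an edge. -/
noncomputable def Network.tauMin (N : Network V E) : ℝ := sInf (Set.range N.time)

/-- `max_ζ u_v(ζ)`, the maximal network inflow rate at `v`. -/
noncomputable def Network.uMax (N : Network V E) (v : V) : ℝ := ⨆ θ : ℝ, N.u v θ

/-- The maximal out-degree `Δ` of the network. -/
def Network.maxOutDeg (N : Network V E) : ℕ :=
  Finset.univ.sup (fun v => (N.outEdges v).card)

/-- All network inflow rates have bounded support. -/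
def Network.BddInflow (N : Network V E) : Prop :=
  ∀ v, ∃ B : ℝ, ∀ θ, B ≤ θ → N.u v θ = 0

/-- The directed graph of the network is acyclic. -/
def Network.Acyclic (N : Network V E) : Prop :=
  ∀ (v : V) (L : List E), L ≠ [] → ¬ IsWalk N.tail N.head v v L

/-- A flow over time: locally integrable nonnegative edge in- and outflow rates. -/
structure FlowOverTime (N : Network V E) where
  fplus : E → ℝ → ℝ
  fminus : E → ℝ → ℝ
  fplus_nonneg : ∀ e θ, 0 ≤ fplus e θ
  fminus_nonneg : ∀ e θ, 0 ≤ fminus e θ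
  fplus_int : ∀ e θ, IntervalIntegrable (fplus e) volume 0 θ
  fminus_int : ∀ e θ, IntervalIntegrable (fminus e) volume 0 θ

/-- The queue length `q_e(θ) = F⁺_e(θ) − F⁻_e(θ + τ_e)`. -/
noncomputable def queueOf (N : Network V E) (fplus fminus : E → ℝ → ℝ) (e : E) (θ : ℝ) : ℝ :=
  (∫ ζ in (0:ℝ)..θ, fplus e ζ) - ∫ ζ in (0:ℝ)..(θ + N.time e), fminus e ζ

/-- The instantaneous travel time `c_e(θ) = τ_e + q_e(θ)/ν_e`. -/
noncomputable def ctimeOf (N : Network V E) (fplus fminus : E → ℝ → ℝ) (e : E) (θ : ℝ) : ℝ :=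
  N.time e + queueOf N fplus fminus e θ / N.cap e

/-- The node label `ℓ_v(θ)`: the shortest instantaneous travel time from `v` to the sink. -/
noncomputable def labelOf (N : Network V E) (fplus fminus : E → ℝ → ℝ) (v : V) (θ : ℝ) : ℝ :=
  sInf { r : ℝ | ∃ L : List E, IsWalk N.tail N.head v N.sink L ∧
                  r = (L.map (fun e => ctimeOf N fplus fminus e θ)).sum }

/-- Edge `e` is active at time `θ`: `ℓ_{tail e}(θ) = c_e(θ) + ℓ_{head e}(θ)`. -/
def ActiveOf (N : Network V E) (fplus fminus : E → ℝ → ℝ) (e : E) (θ : ℝ) : Prop :=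
  labelOf N fplus fminus (N.tail e) θ =
    ctimeOf N fplus fminus e θ + labelOf N fplus fminus (N.head e) θ

/-- Feasibility of a flow over time: flow conservation (i)/(ii), no outflow before `τ_e`
(iii), and queues operating at capacity (iv). -/
def Feasible (N : Network V E) (f : FlowOverTime N) : Prop :=
  (∀ v, v ≠ N.sink → ∀ θ : ℝ, 0 ≤ θ →
      (∑ e ∈ N.outEdges v, f.fplus e θ) - (∑ e ∈ N.inEdges v, f.fminus e θ) = N.u v θ) ∧
  (∀ θ : ℝ, 0 ≤ θ →
      (∑ e ∈ N.outEdges N.sink, f.fplus e θ) - (∑ e ∈ N.inEdges N.sink, f.fminus e θ) ≤ 0) ∧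
  (∀ e, ∀ θ : ℝ, 0 ≤ θ → θ < N.time e → f.fminus e θ = 0) ∧
  (∀ e, ∀ θ : ℝ, 0 ≤ θ →
      f.fminus e (θ + N.time e) =
        if 0 < queueOf N f.fplus f.fminus e θ then N.cap e
        else min (f.fplus e θ) (N.cap e))

/-- An instantaneous dynamic equilibrium: a feasible flow that only sends flow
into currently active edges. -/
def IsIDE (N : Network V E) (f : FlowOverTime N) : Prop :=
  Feasible N f ∧
  ∀ e, ∀ θ : ℝ, 0 ≤ θ → 0 < f.fplus e θ → ActiveOf N f.fplus f.fminus e θ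

/-- `g` is almost everywhere constant on the set `S`. -/
def AEConstOn (g : ℝ → ℝ) (S : Set ℝ) : Prop :=
  ∃ c : ℝ, ∀ᵐ θ ∂(volume.restrict S), g θ = c

/-- The `i`-th segment of the partition `0 = t 0 < t 1 < ⋯ < t n < ∞`. -/
def phaseSeg (n : ℕ) (t : ℕ → ℝ) (i : ℕ) : Set ℝ :=
  if i < n then Set.Ioo (t i) (t (i+1)) else Set.Ioi (t n)

/-- `ℝ≥0` splits (up to finitely many points) into the `n+1` intervals given by
`t`, on each of which all edge in- and outflow rates are a.e. constant; i.e. the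
flow has at most `n+1` phases. -/
def PhasePartition (N : Network V E) (f : FlowOverTime N) (n : ℕ) (t : ℕ → ℝ) : Prop :=
  t 0 = 0 ∧ (∀ i, i < n → t i < t (i+1)) ∧
  ∀ i, i ≤ n → ∀ e, AEConstOn (f.fplus e) (phaseSeg n t i) ∧ AEConstOn (f.fminus e) (phaseSeg n t i)

/-- The function `h_i(ζ) = τ_{vw_i} + q_{vw_i}(ζ)/ν_{vw_i} + ℓ_{w_i}(ζ)`: the shortest
instantaneous travel time to the sink for a particle entering edge `vw_i` at time `ζ`,
given the label functions `ℓw i` of the heads. -/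
noncomputable def hFun {V E : Type} [Fintype V] [DecidableEq V] [Fintype E] [DecidableEq E]
    {p : ℕ} (N : Network V E) (f : FlowOverTime N) (ed : Fin p → E) (ℓw : Fin p → ℝ → ℝ)
    (i : Fin p) (ζ : ℝ) : ℝ :=
  N.time (ed i) + queueOf N f.fplus f.fminus (ed i) ζ / N.cap (ed i) + ℓw i ζ

/-- The function `ℓ_v = min_i h_i`. -/
noncomputable def lvFun {V E : Type} [Fintype V] [DecidableEq V] [Fintype E] [DecidableEq E]
    {p : ℕ} (N : Network V E) (f : FlowOverTime N) (ed : Fin p → E) (ℓw : Fin p → ℝ → ℝ)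
    (ζ : ℝ) : ℝ :=
  ⨅ i : Fin p, hFun N f ed ℓw i ζ


/-- Piecewise linear on `[A, B)` with partition matching the goal shape. -/
def PW (g : ℝ → ℝ) (A B : ℝ) : Prop :=
  ∃ (n : ℕ) (t : ℕ → ℝ),
    t 0 = A ∧ t n = B ∧ (∀ j, j < n → t j < t (j+1)) ∧
    ∀ j, j < n → ∃ m c : ℝ, ∀ ζ ∈ Set.Ico (t j) (t (j+1)), g ζ = m * ζ + c

lemma t_mono {n : ℕ} {t : ℕ → ℝ} (ht : ∀ j, j < n → t j < t (j+1)) :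
    ∀ {j k}, j ≤ k → k ≤ n → t j ≤ t k := by
  intro j k hjk hkn
  induction k with
  | zero => have : j = 0 := by omega
            subst this; exact le_refl _
  | succ k ih =>
    rcases Nat.lt_or_ge j (k+1) with h | h
    · exact le_trans (ih (by omega) (by omega)) (le_of_lt (ht k (by omega)))
    · have : j = k + 1 := by omega
      subst this; rfl

lemma pw_self (g : ℝ → ℝ) (A : ℝ) : PW g A A :=
  ⟨0, fun _ => A, rfl, rfl, by omega, by omega⟩

lemma pw_single {g : ℝ → ℝ} {A B m c : ℝ} (hAB : A < B)
    (hg : ∀ ζ ∈ Ico A B, g ζ = m * ζ + c) : PW g A B := by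
  refine ⟨1, fun k => if k = 0 then A else B, by simp, by simp, ?_, ?_⟩
  · intro j hj; interval_cases j; simpa using hAB
  · intro j hj; interval_cases j; exact ⟨m, c, by simpa using hg⟩

lemma pw_congr {g g' : ℝ → ℝ} {A B : ℝ} (h : ∀ ζ ∈ Ico A B, g ζ = g' ζ)
    (hg : PW g A B) : PW g' A B := by
  obtain ⟨n, t, h0, hn, hinc, hp⟩ := hg
  refine ⟨n, t, h0, hn, hinc, fun j hj => ?_⟩
  obtain ⟨m, c, hmc⟩ := hp j hj
  refine ⟨m, c, fun ζ hζ => ?_⟩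
  rw [← h ζ ⟨h0 ▸ t_mono hinc (Nat.zero_le j) (le_of_lt hj) |>.trans hζ.1,
      lt_of_lt_of_le hζ.2 (hn ▸ t_mono hinc hj (le_refl n))⟩]
  exact hmc ζ hζ

lemma pw_concat {g : ℝ → ℝ} {A M B : ℝ} (h1 : PW g A M) (h2 : PW g M B) :
    PW g A B := by
  obtain ⟨n, t, h0, hn, hinc, hp⟩ := h1
  obtain ⟨n', t', h0', hn', hinc', hp'⟩ := h2
  have e0 : t' 0 = t n := h0'.trans hn.symm
  refine ⟨n + n', fun k => if k < n then t k else t' (k - n), ?_, ?_, ?_, ?_⟩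
  · show (if 0 < n then t 0 else t' (0 - n)) = A
    rcases Nat.eq_zero_or_pos n with h | h
    · rw [if_neg (by omega), show 0 - n = 0 by omega, e0, h, h0]
    · rw [if_pos h]; exact h0
  · show (if n + n' < n then t (n + n') else t' (n + n' - n)) = B
    rw [if_neg (by omega), show n + n' - n = n' by omega]; exact hn'
  · intro j hj
    show (if j < n then t j else t' (j - n)) < (if j + 1 < n then t (j+1) else t' (j+1-n))
    rcases Nat.lt_or_ge (j+1) n with h | h
    · rw [if_pos (by omega), if_pos h]; exact hinc j (by omega)
    · rcases Nat.lt_or_ge j n with h2 | h2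
      · rw [if_pos h2, if_neg (by omega), show j+1-n = 0 by omega, e0,
           show n = j+1 by omega]
        exact hinc j (by omega)
      · rw [if_neg (by omega), if_neg (by omega), show j+1-n = (j-n)+1 by omega]
        exact hinc' (j-n) (by omega)
  · intro j hj
    rcases Nat.lt_or_ge (j+1) n with h | h
    · obtain ⟨m, c, hmc⟩ := hp j (by omega)
      refine ⟨m, c, fun ζ hζ => hmc ζ ?_⟩
      have hζ' : ζ ∈ Ico (if j < n then t j else t' (j - n))
          (if j + 1 < n then t (j+1) else t' (j+1-n)) := hζ
      rwa [if_pos (by omega), if_pos h] at hζ'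
    · rcases Nat.lt_or_ge j n with h2 | h2
      · have e : j + 1 = n := by omega
        obtain ⟨m, c, hmc⟩ := hp j (by omega)
        refine ⟨m, c, fun ζ hζ => hmc ζ ?_⟩
        have hζ' : ζ ∈ Ico (if j < n then t j else t' (j - n))
            (if j + 1 < n then t (j+1) else t' (j+1-n)) := hζ
        rwa [if_pos h2, if_neg (by omega), show j+1-n = 0 by omega, e0, ← e] at hζ'
      · obtain ⟨m, c, hmc⟩ := hp' (j - n) (by omega)
        refine ⟨m, c, fun ζ hζ => hmc ζ ?_⟩
        have hζ' : ζ ∈ Ico (if j < n then t j else t' (j - n))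
            (if j + 1 < n then t (j+1) else t' (j+1-n)) := hζ
        rwa [if_neg (by omega), if_neg (by omega), show j+1-n = (j-n)+1 by omega] at hζ'

lemma pw_concat_fin {g : ℝ → ℝ} :
    ∀ (n : ℕ) (t : ℕ → ℝ), (∀ j, j < n → t j < t (j+1)) →
    (∀ j, j < n → PW g (t j) (t (j+1))) → PW g (t 0) (t n) := by
  intro n
  induction n with
  | zero => exact fun t _ _ => pw_self g (t 0)
  | succ n ih =>
    intro t hinc hp
    exact pw_concat (hp 0 (by omega))
      (ih (fun k => t (k+1)) (fun j hj => hinc (j+1) (by omega))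
        (fun j hj => hp (j+1) (by omega)))

lemma pw_restrict {g : ℝ → ℝ} :
    ∀ (n : ℕ) (t : ℕ → ℝ), (∀ j, j < n → t j < t (j+1)) →
    (∀ j, j < n → ∃ m c : ℝ, ∀ ζ ∈ Ico (t j) (t (j+1)), g ζ = m * ζ + c) →
    ∀ u w : ℝ, t 0 ≤ u → u < w → w ≤ t n → PW g u w := by
  intro n
  induction n with
  | zero => intro t _ _ u w hu huw hw; linarith
  | succ n ih =>
    intro t hinc hp u w hu huw hw
    rcases le_or_gt w (t 1) with h | h
    · obtain ⟨m, c, hmc⟩ := hp 0 (by omega)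
      exact pw_single huw (fun ζ hζ => hmc ζ ⟨le_trans hu hζ.1, lt_of_lt_of_le hζ.2 h⟩)
    · have hrec := ih (fun k => t (k+1)) (fun j hj => hinc (j+1) (by omega))
        (fun j hj => hp (j+1) (by omega))
      rcases le_or_gt (t 1) u with h2 | h2
      · exact hrec u w h2 huw hw
      · obtain ⟨m, c, hmc⟩ := hp 0 (by omega)
        exact pw_concat
          (pw_single h2 (fun ζ hζ => hmc ζ ⟨le_trans hu hζ.1, hζ.2⟩))
          (hrec (t 1) w (le_refl _) h hw)

lemma pw_restrict' {g : ℝ → ℝ} {A B u w : ℝ} (hg : PW g A B)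
    (hu : A ≤ u) (huw : u < w) (hw : w ≤ B) : PW g u w := by
  obtain ⟨n, t, h0, hn, hinc, hp⟩ := hg
  exact pw_restrict n t hinc hp u w (h0 ▸ hu) huw (hn ▸ hw)

/-- min of two affine functions on `[A,B)` is piecewise linear. -/
lemma pw_min_aff_aff {g g' : ℝ → ℝ} {A B m c m' c' : ℝ} (hAB : A < B)
    (hg : ∀ ζ ∈ Ico A B, g ζ = m * ζ + c) (hg' : ∀ ζ ∈ Ico A B, g' ζ = m' * ζ + c') :
    PW (fun ζ => min (g ζ) (g' ζ)) A B := by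
  have key : ∀ ζ ∈ Ico A B, min (g ζ) (g' ζ) = min (m * ζ + c) (m' * ζ + c') := by
    intro ζ hζ; rw [hg ζ hζ, hg' ζ hζ]
  by_cases hall : ∀ ζ ∈ Ico A B, m * ζ + c ≤ m' * ζ + c'
  · exact pw_single hAB (fun ζ hζ => by rw [key ζ hζ, min_eq_left (hall ζ hζ)])
  · by_cases hall' : ∀ ζ ∈ Ico A B, m' * ζ + c' ≤ m * ζ + c
    · exact pw_single hAB (fun ζ hζ => by rw [key ζ hζ, min_eq_right (hall' ζ hζ)])
    · push_neg at hall hall'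
      obtain ⟨x, hx, hxlt⟩ := hall
      obtain ⟨y, hy, hylt⟩ := hall'
      have hmm : m ≠ m' := by
        intro hmm; subst hmm
        rcases le_total c c' with h | h <;> nlinarith
      set r : ℝ := (c' - c) / (m - m') with hr
      have hroot : m * r + c = m' * r + c' := by
        have hne := sub_ne_zero.mpr hmm
        have h2 : (m - m') * r = c' - c := by rw [hr]; field_simp
        linear_combination h2
      -- sign of (m - m') determines which side is smaller on each side of r
      have hlt1 : ∀ ζ : ℝ, (m - m') * (ζ - r) ≤ 0 → m * ζ + c ≤ m' * ζ + c' := by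
        intro ζ hζ; nlinarith [hroot]
      have hlt2 : ∀ ζ : ℝ, 0 ≤ (m - m') * (ζ - r) → m' * ζ + c' ≤ m * ζ + c := by
        intro ζ hζ; nlinarith [hroot]
      have hxr : 0 < (m - m') * (x - r) := by nlinarith [hroot]
      have hyr : (m - m') * (y - r) < 0 := by nlinarith [hroot]
      have hrA : A < r := by
        rcases lt_trichotomy (m - m') 0 with hs | hs | hs
        · have : x < r := by nlinarith
          exact lt_of_le_of_lt hx.1 this
        · exact absurd hs (sub_ne_zero.mpr hmm)
        · have : y < r := by nlinarith
          exact lt_of_le_of_lt hy.1 this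
      have hrB : r < B := by
        rcases lt_trichotomy (m - m') 0 with hs | hs | hs
        · have : r < y := by nlinarith
          exact lt_trans this hy.2
        · exact absurd hs (sub_ne_zero.mpr hmm)
        · have : r < x := by nlinarith
          exact lt_trans this hx.2
      refine pw_concat (M := r) ?_ ?_
      · rcases lt_trichotomy (m - m') 0 with hs | hs | hs
        · exact pw_single hrA (fun ζ hζ => by
            rw [key ζ ⟨hζ.1, lt_trans hζ.2 hrB⟩,
              min_eq_right (hlt2 ζ (by nlinarith [hζ.2]))])
        · exact absurd hs (sub_ne_zero.mpr hmm)
        · exact pw_single hrA (fun ζ hζ => by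
            rw [key ζ ⟨hζ.1, lt_trans hζ.2 hrB⟩,
              min_eq_left (hlt1 ζ (by nlinarith [hζ.2]))])
      · rcases lt_trichotomy (m - m') 0 with hs | hs | hs
        · exact pw_single hrB (fun ζ hζ => by
            rw [key ζ ⟨le_trans (le_of_lt hrA) hζ.1, hζ.2⟩,
              min_eq_left (hlt1 ζ (by nlinarith [hζ.1]))])
        · exact absurd hs (sub_ne_zero.mpr hmm)
        · exact pw_single hrB (fun ζ hζ => by
            rw [key ζ ⟨le_trans (le_of_lt hrA) hζ.1, hζ.2⟩,
              min_eq_right (hlt2 ζ (by nlinarith [hζ.1]))])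

lemma pw_max_aff_aff {g g' : ℝ → ℝ} {A B m c m' c' : ℝ} (hAB : A < B)
    (hg : ∀ ζ ∈ Ico A B, g ζ = m * ζ + c) (hg' : ∀ ζ ∈ Ico A B, g' ζ = m' * ζ + c') :
    PW (fun ζ => max (g ζ) (g' ζ)) A B := by
  have h1 : PW (fun ζ => min (-g ζ) (-g' ζ)) A B :=
    pw_min_aff_aff hAB (g := fun ζ => -g ζ) (g' := fun ζ => -g' ζ)
      (m := -m) (c := -c) (m' := -m') (c' := -c')
      (fun ζ hζ => by show -g ζ = -m * ζ + -c; rw [hg ζ hζ]; ring)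
      (fun ζ hζ => by show -g' ζ = -m' * ζ + -c'; rw [hg' ζ hζ]; ring)
  obtain ⟨n, t, h0, hn, hinc, hp⟩ := h1
  refine ⟨n, t, h0, hn, hinc, fun j hj => ?_⟩
  obtain ⟨mm, cc, hmc⟩ := hp j hj
  refine ⟨-mm, -cc, fun ζ hζ => ?_⟩
  have := hmc ζ hζ
  simp only [min_def, max_def] at this ⊢
  split at this <;> split <;> linarith

lemma pw_min_aff' {g g' : ℝ → ℝ} {A B m c : ℝ} (hAB : A < B)
    (hg : ∀ ζ ∈ Ico A B, g ζ = m * ζ + c) (hg' : PW g' A B) :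
    PW (fun ζ => min (g ζ) (g' ζ)) A B := by
  obtain ⟨n, t, h0, hn, hinc, hp⟩ := hg'
  subst h0 hn
  refine pw_concat_fin n t hinc (fun j hj => ?_)
  obtain ⟨m', c', hmc'⟩ := hp j hj
  have hsub : Ico (t j) (t (j+1)) ⊆ Ico (t 0) (t n) := fun ζ hζ =>
    ⟨le_trans (t_mono hinc (Nat.zero_le j) (le_of_lt hj)) hζ.1,
     lt_of_lt_of_le hζ.2 (t_mono hinc hj (le_refl n))⟩
  exact pw_min_aff_aff (hinc j hj) (fun ζ hζ => hg ζ (hsub hζ)) hmc'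

lemma pw_min {g g' : ℝ → ℝ} {A B : ℝ} (hg : PW g A B) (hg' : PW g' A B) :
    PW (fun ζ => min (g ζ) (g' ζ)) A B := by
  obtain ⟨n, t, h0, hn, hinc, hp⟩ := hg
  subst h0 hn
  refine pw_concat_fin n t hinc (fun j hj => ?_)
  obtain ⟨m, c, hmc⟩ := hp j hj
  have hA : t 0 ≤ t j := t_mono hinc (Nat.zero_le j) (le_of_lt hj)
  have hB : t (j+1) ≤ t n := t_mono hinc hj (le_refl n)
  exact pw_min_aff' (hinc j hj) hmc (pw_restrict' hg' hA (hinc j hj) hB)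

/-- Fold a property closed under pointwise binary `min` (and pointwise congruence)
through a finite infimum. -/
lemma pred_iInf_fin (P : (ℝ → ℝ) → Prop)
    (hcongr : ∀ g g', (∀ ζ, g ζ = g' ζ) → P g → P g')
    (hmin : ∀ g g', P g → P g' → P (fun ζ => min (g ζ) (g' ζ))) :
    ∀ (p : ℕ), 1 ≤ p → ∀ (H : Fin p → ℝ → ℝ), (∀ i, P (H i)) →
    P (fun ζ => ⨅ i, H i ζ) := by
  intro p
  induction p with
  | zero => omega
  | succ p ih =>
    intro _ H hH
    rcases Nat.eq_zero_or_pos p with hp | hp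
    · subst hp
      refine hcongr (H 0) _ (fun ζ => ?_) (hH 0)
      have : (⨅ i : Fin 1, H i ζ) = H (default : Fin 1) ζ := ciInf_unique
      rw [this]; rfl
    · have hdec : ∀ ζ, (⨅ i : Fin (p+1), H i ζ) =
          min (H (Fin.last p) ζ) (⨅ i : Fin p, H i.castSucc ζ) := by
        intro ζ
        apply le_antisymm
        · refine le_min (ciInf_le (Set.Finite.bddBelow (Set.finite_range _)) _) ?_
          haveI : Nonempty (Fin p) := ⟨⟨0, hp⟩⟩
          exact le_ciInf fun i => ciInf_le (Set.Finite.bddBelow (Set.finite_range _)) i.castSucc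
        · refine le_ciInf fun i => ?_
          induction i using Fin.lastCases with
          | last => exact min_le_left _ _
          | cast j =>
            haveI : Nonempty (Fin p) := ⟨⟨0, hp⟩⟩
            exact (min_le_right _ _).trans
              (ciInf_le (Set.Finite.bddBelow (Set.finite_range _)) j)
      refine hcongr _ _ (fun ζ => (hdec ζ).symm) ?_
      exact hmin _ _ (hH (Fin.last p))
        (ih hp (fun i => H i.castSucc) (fun i => hH i.castSucc))

section QueueLemmas

variable {V E : Type} [Fintype V] [DecidableEq V] [Fintype E] [DecidableEq E]
variable {N : Network V E} {f : FlowOverTime N}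

lemma fplus_intOn (e : E) (a b : ℝ) : IntervalIntegrable (f.fplus e) volume a b :=
  (f.fplus_int e a).symm.trans (f.fplus_int e b)

lemma fminus_intOn (e : E) (a b : ℝ) : IntervalIntegrable (f.fminus e) volume a b :=
  (f.fminus_int e a).symm.trans (f.fminus_int e b)

lemma fminus_shift_intOn (e : E) (a b : ℝ) :
    IntervalIntegrable (fun s => f.fminus e (s + N.time e)) volume a b := by
  have := (fminus_intOn (f := f) e (a + N.time e) (b + N.time e)).comp_add_right (N.time e)
  simpa using this

lemma queue_continuous (e : E) : Continuous (queueOf N f.fplus f.fminus e) := by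
  have h1 : Continuous fun θ => ∫ ζ in (0:ℝ)..θ, f.fplus e ζ :=
    intervalIntegral.continuous_primitive (fun a b => fplus_intOn e a b) 0
  have h2 : Continuous fun θ => ∫ ζ in (0:ℝ)..θ, f.fminus e ζ :=
    intervalIntegral.continuous_primitive (fun a b => fminus_intOn e a b) 0
  exact h1.sub (h2.comp (continuous_id.add continuous_const))

lemma queue_sub (e : E) (σ ζ : ℝ) :
    queueOf N f.fplus f.fminus e ζ - queueOf N f.fplus f.fminus e σ =
      ∫ s in σ..ζ, (f.fplus e s - f.fminus e (s + N.time e)) := by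
  have h1 : (∫ s in (0:ℝ)..ζ, f.fplus e s) - ∫ s in (0:ℝ)..σ, f.fplus e s
      = ∫ s in σ..ζ, f.fplus e s :=
    intervalIntegral.integral_interval_sub_left (fplus_intOn e 0 ζ) (fplus_intOn e 0 σ)
  have h2 : (∫ s in (0:ℝ)..(ζ + N.time e), f.fminus e s)
      - ∫ s in (0:ℝ)..(σ + N.time e), f.fminus e s
      = ∫ s in σ..ζ, f.fminus e (s + N.time e) := by
    rw [intervalIntegral.integral_comp_add_right (f.fminus e) (N.time e)]
    exact intervalIntegral.integral_interval_sub_left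
      (fminus_intOn e 0 _) (fminus_intOn e 0 _)
  rw [intervalIntegral.integral_sub (fplus_intOn e σ ζ) (fminus_shift_intOn e σ ζ),
    ← h1, ← h2]
  unfold queueOf; ring

lemma queue_zero (e : E) (hf : Feasible N f) : queueOf N f.fplus f.fminus e 0 = 0 := by
  unfold queueOf
  rw [intervalIntegral.integral_same, zero_add]
  have : ∫ s in (0:ℝ)..(N.time e), f.fminus e s = ∫ s in (0:ℝ)..(N.time e), (0:ℝ) := by
    apply intervalIntegral.integral_congr_ae
    rw [MeasureTheory.ae_iff]
    refine measure_mono_null (fun x hx => ?_) (measure_singleton (N.time e))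
    simp only [Set.mem_setOf_eq, not_forall] at hx
    obtain ⟨hxI, hxne⟩ := hx
    rw [Set.uIoc_of_le (le_of_lt (N.time_pos e))] at hxI
    by_contra hxt
    have hxlt : x < N.time e := lt_of_le_of_ne hxI.2 (by simpa using hxt)
    exact hxne (hf.2.2.1 e x (le_of_lt hxI.1) hxlt)
  rw [this, intervalIntegral.integral_zero, sub_zero]

lemma fminus_le_cap (e : E) (hf : Feasible N f) {s : ℝ} (hs : 0 ≤ s) :
    f.fminus e (s + N.time e) ≤ N.cap e := by
  rw [hf.2.2.2 e s hs]
  split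
  · exact le_refl _
  · exact min_le_right _ _

lemma queue_nonneg (e : E) (hf : Feasible N f) {ζ : ℝ} (hζ : 0 ≤ ζ) :
    0 ≤ queueOf N f.fplus f.fminus e ζ := by
  set q := queueOf N f.fplus f.fminus e with hq
  by_contra hneg
  push_neg at hneg
  set S : Set ℝ := Icc 0 ζ ∩ {s | 0 ≤ q s} with hS
  have hSc : IsCompact S :=
    isCompact_Icc.inter_right (isClosed_le continuous_const (queue_continuous e))
  have hSne : S.Nonempty := ⟨0, ⟨le_refl _, hζ⟩, le_of_eq (queue_zero e hf).symm⟩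
  set σ := sSup S with hσ
  have hσS : σ ∈ S := hSc.sSup_mem hSne
  have hσle : σ ≤ ζ := hσS.1.2
  have hup : ∀ s ∈ Ioc σ ζ, q s < 0 := by
    intro s hs
    by_contra h
    push_neg at h
    have : s ∈ S := ⟨⟨le_trans hσS.1.1 (le_of_lt hs.1), hs.2⟩, h⟩
    exact absurd (le_csSup hSc.bddAbove this) (not_le.mpr hs.1)
  have hint : 0 ≤ ∫ s in σ..ζ, (f.fplus e s - f.fminus e (s + N.time e)) := by
    refine intervalIntegral.integral_nonneg_of_ae_restrict hσle ?_
    have hnull : (volume.restrict (Icc σ ζ)) ({σ} ∪ (Icc σ ζ)ᶜ) = 0 := by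
      rw [MeasureTheory.Measure.restrict_apply
        ((measurableSet_singleton σ).union measurableSet_Icc.compl)]
      refine measure_mono_null (fun x hx => ?_) (measure_singleton σ)
      rcases hx.1 with h | h
      · exact h
      · exact absurd hx.2 h
    rw [Filter.EventuallyLE, MeasureTheory.ae_iff]
    refine measure_mono_null (fun x hx => ?_) hnull
    simp only [Set.mem_setOf_eq] at hx
    by_cases hxI : x ∈ Icc σ ζ
    · left
      by_contra hxσ
      have hxIoc : x ∈ Ioc σ ζ :=
        ⟨lt_of_le_of_ne hxI.1 (Ne.symm (by simpa using hxσ)), hxI.2⟩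
      have hx0 : (0:ℝ) ≤ x := le_trans hσS.1.1 (le_of_lt hxIoc.1)
      have hqx : ¬ 0 < q x := not_lt.mpr (le_of_lt (hup x hxIoc))
      have : f.fminus e (x + N.time e) = min (f.fplus e x) (N.cap e) := by
        rw [hf.2.2.2 e x hx0, if_neg hqx]
      exact hx (by rw [Pi.zero_apply]; rw [this]; simp [sub_nonneg, min_le_left])
    · right; exact hxI
  have := queue_sub (f := f) e σ ζ
  have hqσ : 0 ≤ q σ := hσS.2
  have : q ζ < 0 := hneg
  linarith [queue_sub (f := f) e σ ζ, hint, hqσ]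

lemma ae_ne_pt (c : ℝ) : ∀ᵐ x : ℝ ∂volume, x ≠ c := by
  rw [MeasureTheory.ae_iff]
  refine measure_mono_null (fun x hx => ?_) (measure_singleton c)
  simpa using hx

lemma queue_int_congr (e : E) (hf : Feasible N f) {t₀ ζ a : ℝ} (h0 : 0 ≤ t₀)
    (hζ : t₀ ≤ ζ) (hconst : ∀ s ∈ Ico t₀ ζ, f.fplus e s = a) :
    ∫ s in t₀..ζ, (f.fplus e s - f.fminus e (s + N.time e)) =
      ∫ s in t₀..ζ, (a - f.fminus e (s + N.time e)) := by
  apply intervalIntegral.integral_congr_ae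
  filter_upwards [ae_ne_pt ζ] with s hsne hsI
  rw [Set.uIoc_of_le hζ] at hsI
  rw [hconst s ⟨le_of_lt hsI.1, lt_of_le_of_ne hsI.2 hsne⟩]

lemma queue_lower (e : E) (hf : Feasible N f) {t₀ ζ a : ℝ} (h0 : 0 ≤ t₀)
    (hζ : t₀ ≤ ζ) (hconst : ∀ s ∈ Ico t₀ ζ, f.fplus e s = a) :
    queueOf N f.fplus f.fminus e t₀ + (a - N.cap e) * (ζ - t₀) ≤
      queueOf N f.fplus f.fminus e ζ := by
  have hsub := queue_sub (f := f) e t₀ ζ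
  rw [queue_int_congr e hf h0 hζ hconst] at hsub
  have hmono : ∫ s in t₀..ζ, (a - N.cap e) ≤
      ∫ s in t₀..ζ, (a - f.fminus e (s + N.time e)) := by
    refine intervalIntegral.integral_mono_on hζ intervalIntegrable_const
      (intervalIntegrable_const.sub (fminus_shift_intOn e t₀ ζ)) (fun x hx => ?_)
    have := fminus_le_cap e hf (le_trans h0 hx.1)
    linarith
  rw [intervalIntegral.integral_const, smul_eq_mul] at hmono
  nlinarith [hmono, hsub]

lemma queue_formula (e : E) (hf : Feasible N f) {t₀ ζ a : ℝ} (h0 : 0 ≤ t₀)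
    (hζ : t₀ ≤ ζ) (hconst : ∀ s ∈ Ico t₀ ζ, f.fplus e s = a) :
    queueOf N f.fplus f.fminus e ζ =
      max (queueOf N f.fplus f.fminus e t₀ + (a - N.cap e) * (ζ - t₀)) 0 := by
  set q := queueOf N f.fplus f.fminus e with hq
  refine le_antisymm ?_ (max_le (queue_lower e hf h0 hζ hconst)
    (queue_nonneg e hf (le_trans h0 hζ)))
  by_cases hall : ∀ s ∈ Icc t₀ ζ, 0 < q s
  · -- queue positive throughout: exactly linear
    have hsub := queue_sub (f := f) e t₀ ζ
    rw [queue_int_congr e hf h0 hζ hconst] at hsub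
    have hcongr : ∫ s in t₀..ζ, (a - f.fminus e (s + N.time e)) =
        ∫ s in t₀..ζ, (a - N.cap e) := by
      apply intervalIntegral.integral_congr_ae
      filter_upwards [] with s hsI
      rw [Set.uIoc_of_le hζ] at hsI
      have hs0 : (0:ℝ) ≤ s := le_trans h0 (le_of_lt hsI.1)
      rw [hf.2.2.2 e s hs0, if_pos (hall s ⟨le_of_lt hsI.1, hsI.2⟩)]
    rw [hcongr, intervalIntegral.integral_const, smul_eq_mul] at hsub
    have : q ζ = q t₀ + (a - N.cap e) * (ζ - t₀) := by nlinarith [hsub]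
    rw [this]; exact le_max_left _ _
  · push_neg at hall
    obtain ⟨s₀, hs₀, hqs₀⟩ := hall
    set S : Set ℝ := Icc t₀ ζ ∩ {s | q s ≤ 0} with hS
    have hSc : IsCompact S :=
      isCompact_Icc.inter_right (isClosed_le (queue_continuous e) continuous_const)
    have hSne : S.Nonempty := ⟨s₀, hs₀, hqs₀⟩
    set σ := sSup S with hσ
    have hσS : σ ∈ S := hSc.sSup_mem hSne
    have hqσ : q σ = 0 :=
      le_antisymm hσS.2 (queue_nonneg e hf (le_trans h0 hσS.1.1))
    have hup : ∀ s ∈ Ioc σ ζ, 0 < q s := by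
      intro s hs
      by_contra h
      push_neg at h
      have : s ∈ S := ⟨⟨le_trans hσS.1.1 (le_of_lt hs.1), hs.2⟩, h⟩
      exact absurd (le_csSup hSc.bddAbove this) (not_le.mpr hs.1)
    have hσ0 : (0:ℝ) ≤ σ := le_trans h0 hσS.1.1
    have hσζ : σ ≤ ζ := hσS.1.2
    have hsub := queue_sub (f := f) e σ ζ
    have hcongr : ∫ s in σ..ζ, (f.fplus e s - f.fminus e (s + N.time e)) =
        ∫ s in σ..ζ, (a - N.cap e) := by
      apply intervalIntegral.integral_congr_ae
      filter_upwards [ae_ne_pt ζ] with s hsne hsI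
      rw [Set.uIoc_of_le hσζ] at hsI
      have hs0 : (0:ℝ) ≤ s := le_trans hσ0 (le_of_lt hsI.1)
      rw [hconst s ⟨le_trans hσS.1.1 (le_of_lt hsI.1), lt_of_le_of_ne hsI.2 hsne⟩,
        hf.2.2.2 e s hs0, if_pos (hup s hsI)]
    rw [hcongr, intervalIntegral.integral_const, smul_eq_mul] at hsub
    have hqζ : q ζ = (a - N.cap e) * (ζ - σ) := by nlinarith [hsub, hqσ]
    rcases le_or_gt a (N.cap e) with hcap | hcap
    · have : q ζ ≤ 0 := by nlinarith [hqζ]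
      exact le_trans this (le_max_right _ _)
    · -- a > cap: σ must equal t₀ and q t₀ = 0
      have hlow := queue_lower e hf h0 hσS.1.1 (fun s hs =>
        hconst s ⟨hs.1, lt_of_lt_of_le hs.2 hσζ⟩)
      have hqt₀ : 0 ≤ q t₀ := queue_nonneg e hf h0
      have h1 : 0 ≤ (a - N.cap e) * (σ - t₀) := by
        apply mul_nonneg (by linarith) (by linarith [hσS.1.1])
      have hq0 : q t₀ = 0 := by nlinarith [hlow, hqσ]
      have hσt₀ : σ = t₀ := by nlinarith [hlow, hqσ, hσS.1.1]
      rw [hqζ, hσt₀, hq0]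
      have : (a - N.cap e) * (ζ - t₀) = 0 + (a - N.cap e) * (ζ - t₀) := by ring
      rw [← this]
      exact le_max_left _ _

lemma queue_right (e : E) (hf : Feasible N f) {θ δ₀ : ℝ} (hθ : 0 ≤ θ) (hδ₀ : 0 < δ₀)
    (hconst : ∀ s ∈ Ico θ (θ + δ₀), f.fplus e s = f.fplus e θ) :
    ∃ δ sp : ℝ, 0 < δ ∧ δ ≤ δ₀ ∧
      (∀ ζ ∈ Ico θ (θ + δ), queueOf N f.fplus f.fminus e ζ =
        queueOf N f.fplus f.fminus e θ + sp * (ζ - θ)) ∧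
      ((0 < queueOf N f.fplus f.fminus e θ ∧ sp = f.fplus e θ - N.cap e) ∨
       (queueOf N f.fplus f.fminus e θ = 0 ∧ sp = max (f.fplus e θ - N.cap e) 0)) := by
  set q := queueOf N f.fplus f.fminus e with hq
  set a := f.fplus e θ with ha
  set ν := N.cap e with hν
  have hform : ∀ ζ ∈ Ico θ (θ + δ₀), q ζ = max (q θ + (a - ν) * (ζ - θ)) 0 := by
    intro ζ hζ
    exact queue_formula e hf hθ hζ.1
      (fun s hs => hconst s ⟨hs.1, lt_of_lt_of_le hs.2 (le_of_lt hζ.2)⟩)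
  have hq0 : (0:ℝ) ≤ q θ := queue_nonneg e hf hθ
  rcases lt_or_eq_of_le hq0 with hpos | hzero
  · set A := |a - ν| with hA
    have hA1 : a - ν ≤ A := le_abs_self _
    have hA2 : -(a - ν) ≤ A := neg_le_abs _
    have hA0 : 0 ≤ A := abs_nonneg _
    refine ⟨min δ₀ (q θ / (A + 1)), a - ν, lt_min hδ₀ (by positivity), min_le_left _ _,
      fun ζ hζ => ?_, Or.inl ⟨hpos, rfl⟩⟩
    have h1 : ζ - θ < q θ / (A + 1) := by
      have h := hζ.2
      have := min_le_right δ₀ (q θ / (A + 1))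
      linarith
    have h2 : 0 ≤ ζ - θ := by linarith [hζ.1]
    have h3 : (ζ - θ) * (A + 1) < q θ :=
      (lt_div_iff₀ (by positivity : (0:ℝ) < A + 1)).mp h1
    have hlin : 0 < q θ + (a - ν) * (ζ - θ) := by nlinarith
    rw [hform ζ ⟨hζ.1, lt_of_lt_of_le hζ.2 (by
      have := min_le_left δ₀ (q θ / (A+1)); linarith)⟩,
      max_eq_left (le_of_lt hlin)]
  · have hzero' : q θ = 0 := hzero.symm
    refine ⟨δ₀, max (a - ν) 0, hδ₀, le_refl _, fun ζ hζ => ?_, Or.inr ⟨hzero', rfl⟩⟩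
    have h2 : 0 ≤ ζ - θ := by linarith [hζ.1]
    rw [hform ζ hζ, hzero', zero_add, max_mul_of_nonneg _ _ h2, zero_mul, zero_add]

lemma queue_left (e : E) (hf : Feasible N f) {θ t₀ a : ℝ} (h0 : 0 ≤ t₀) (ht : t₀ < θ)
    (hconst : ∀ s ∈ Ioo t₀ θ, f.fplus e s = a) :
    ∃ δ sm : ℝ, 0 < δ ∧ t₀ < θ - δ ∧
      (∀ ζ ∈ Ioc (θ - δ) θ, queueOf N f.fplus f.fminus e ζ =
        queueOf N f.fplus f.fminus e θ + sm * (ζ - θ)) ∧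
      ((0 < queueOf N f.fplus f.fminus e θ ∧ sm = a - N.cap e) ∨
       (queueOf N f.fplus f.fminus e θ = 0 ∧ sm ≤ 0)) := by
  set q := queueOf N f.fplus f.fminus e with hq
  set ν := N.cap e with hν
  have ht₁l : t₀ < (t₀ + θ) / 2 := by linarith
  have ht₁r : (t₀ + θ) / 2 < θ := by linarith
  set t₁ := (t₀ + θ) / 2 with ht₁
  have h0' : 0 ≤ t₁ := by linarith
  have hform : ∀ ζ ∈ Icc t₁ θ, q ζ = max (q t₁ + (a - ν) * (ζ - t₁)) 0 := by
    intro ζ hζ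
    exact queue_formula e hf h0' hζ.1
      (fun s hs => hconst s ⟨lt_of_lt_of_le ht₁l hs.1, lt_of_lt_of_le hs.2 hζ.2⟩)
  have hqθ : q θ = max (q t₁ + (a - ν) * (θ - t₁)) 0 := hform θ ⟨le_of_lt ht₁r, le_refl θ⟩
  set Lθ := q t₁ + (a - ν) * (θ - t₁) with hLθdef
  have hLform : ∀ ζ ∈ Icc t₁ θ, q ζ = max (Lθ + (a - ν) * (ζ - θ)) 0 := by
    intro ζ hζ
    rw [hform ζ hζ]
    congr 1
    simp only [hLθdef]; ring
  set A := |a - ν| with hA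
  have hA1 : a - ν ≤ A := le_abs_self _
  have hA2 : -(a - ν) ≤ A := neg_le_abs _
  have hA0 : 0 ≤ A := abs_nonneg _
  have hq0 : (0:ℝ) ≤ q θ := queue_nonneg e hf (by linarith)
  rcases lt_or_eq_of_le hq0 with hpos | hzero
  · -- q θ > 0 : Lθ = q θ
    have hLθ : Lθ = q θ := by
      rcases max_cases Lθ 0 with ⟨h1, _⟩ | ⟨h1, h2⟩
      · exact ((hqθ.trans h1)).symm
      · rw [hqθ, h1] at hpos; exact absurd hpos (lt_irrefl 0)
    refine ⟨min ((θ - t₁)/2) (q θ / (A + 1)), a - ν,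
      lt_min (by linarith) (by positivity), by
        have := min_le_left ((θ - t₁)/2) (q θ / (A + 1)); linarith,
      fun ζ hζ => ?_, Or.inl ⟨hpos, rfl⟩⟩
    have hζ1 : t₁ ≤ ζ := by
      have := min_le_left ((θ - t₁)/2) (q θ / (A + 1))
      have := hζ.1; linarith
    have h1 : θ - ζ < q θ / (A + 1) := by
      have := min_le_right ((θ - t₁)/2) (q θ / (A + 1))
      have := hζ.1; linarith
    have h2 : ζ - θ ≤ 0 := by linarith [hζ.2]
    have h3 : (θ - ζ) * (A + 1) < q θ :=
      (lt_div_iff₀ (by positivity : (0:ℝ) < A + 1)).mp h1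
    have hlin : 0 < Lθ + (a - ν) * (ζ - θ) := by nlinarith
    rw [hLform ζ ⟨hζ1, hζ.2⟩, max_eq_left (le_of_lt hlin), hLθ]
  · -- q θ = 0
    have hzero' : q θ = 0 := hzero.symm
    have hLθ : Lθ ≤ 0 := by
      by_contra h
      push_neg at h
      rw [hqθ, max_eq_left (le_of_lt h)] at hzero'
      exact absurd hzero' (ne_of_gt h)
    rcases lt_or_eq_of_le hLθ with hLlt | hLeq
    · -- Lθ < 0 : q = 0 near θ on the left
      refine ⟨min ((θ - t₁)/2) ((-Lθ) / (A + 1)), 0,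
        lt_min (by linarith) (div_pos (by linarith) (by positivity)), by
          have := min_le_left ((θ - t₁)/2) ((-Lθ) / (A + 1)); linarith,
        fun ζ hζ => ?_, Or.inr ⟨hzero', le_refl 0⟩⟩
      have hζ1 : t₁ ≤ ζ := by
        have := min_le_left ((θ - t₁)/2) ((-Lθ) / (A + 1))
        have := hζ.1; linarith
      have h1 : θ - ζ < (-Lθ) / (A + 1) := by
        have := min_le_right ((θ - t₁)/2) ((-Lθ) / (A + 1))
        have := hζ.1; linarith
      have h3 : (θ - ζ) * (A + 1) < -Lθ :=
        (lt_div_iff₀ (by positivity : (0:ℝ) < A + 1)).mp h1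
      have hlin : Lθ + (a - ν) * (ζ - θ) < 0 := by nlinarith [hζ.2]
      rw [hLform ζ ⟨hζ1, hζ.2⟩, max_eq_right (le_of_lt hlin), hzero', zero_mul, add_zero]
    · -- Lθ = 0
      refine ⟨θ - t₁, min (a - ν) 0, by linarith, by linarith,
        fun ζ hζ => ?_, Or.inr ⟨hzero', min_le_right _ _⟩⟩
      have hζ1 : t₁ ≤ ζ := by linarith [hζ.1]
      have h2 : ζ - θ ≤ 0 := by linarith [hζ.2]
      rw [hLform ζ ⟨hζ1, hζ.2⟩, hLeq, zero_add, hzero', zero_add]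
      rcases le_or_gt (a - ν) 0 with hs | hs
      · rw [min_eq_left hs, max_eq_left (by nlinarith)]
      · rw [min_eq_right (le_of_lt hs), max_eq_right (by nlinarith), zero_mul]

lemma affine_deriv_left {g : ℝ → ℝ} {θ δ m c : ℝ} (hδ : 0 < δ)
    (hg : ∀ ζ ∈ Ioc (θ - δ) θ, g ζ = m * ζ + c) :
    HasDerivWithinAt g m (Iic θ) θ ∧ derivWithin g (Iic θ) θ = m := by
  have haff : HasDerivAt (fun ζ : ℝ => m * ζ + c) m θ := by
    simpa using ((hasDerivAt_id θ).const_mul m).add_const c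
  have hmem : Ioi (θ - δ) ∈ nhdsWithin θ (Iic θ) :=
    mem_nhdsWithin_of_mem_nhds (Ioi_mem_nhds (by linarith))
  have hev : g =ᶠ[nhdsWithin θ (Iic θ)] fun ζ => m * ζ + c := by
    filter_upwards [hmem, self_mem_nhdsWithin] with ζ h1 h2
    exact hg ζ ⟨h1, h2⟩
  have hd : HasDerivWithinAt g m (Iic θ) θ :=
    (haff.hasDerivWithinAt).congr_of_eventuallyEq hev (hg θ ⟨by linarith, le_refl θ⟩)
  exact ⟨hd, hd.derivWithin (uniqueDiffOn_Iic θ θ (show θ ∈ Iic θ from le_refl θ))⟩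

lemma affine_deriv_right {g : ℝ → ℝ} {θ δ m c : ℝ} (hδ : 0 < δ)
    (hg : ∀ ζ ∈ Ico θ (θ + δ), g ζ = m * ζ + c) :
    HasDerivWithinAt g m (Ici θ) θ ∧ derivWithin g (Ici θ) θ = m := by
  have haff : HasDerivAt (fun ζ : ℝ => m * ζ + c) m θ := by
    simpa using ((hasDerivAt_id θ).const_mul m).add_const c
  have hmem : Iio (θ + δ) ∈ nhdsWithin θ (Ici θ) :=
    mem_nhdsWithin_of_mem_nhds (Iio_mem_nhds (by linarith))
  have hev : g =ᶠ[nhdsWithin θ (Ici θ)] fun ζ => m * ζ + c := by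
    filter_upwards [hmem, self_mem_nhdsWithin] with ζ h1 h2
    exact hg ζ ⟨h2, h1⟩
  have hd : HasDerivWithinAt g m (Ici θ) θ :=
    (haff.hasDerivWithinAt).congr_of_eventuallyEq hev (hg θ ⟨le_refl θ, by linarith⟩)
  exact ⟨hd, hd.derivWithin (uniqueDiffOn_Ici θ θ (show θ ∈ Ici θ from le_refl θ))⟩

lemma find_piece : ∀ (n : ℕ) (t : ℕ → ℝ) (θ : ℝ), t 0 ≤ θ → θ < t n →
    ∃ j, j < n ∧ t j ≤ θ ∧ θ < t (j+1) := by
  intro n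
  induction n with
  | zero => intro t θ h1 h2; linarith
  | succ n ih =>
    intro t θ h1 h2
    rcases lt_or_ge θ (t 1) with h | h
    · exact ⟨0, by omega, h1, h⟩
    · obtain ⟨j, hj, hjl, hjr⟩ := ih (fun k => t (k+1)) θ h h2
      exact ⟨j+1, by omega, hjl, hjr⟩

lemma edge_local {p : ℕ} (hf : Feasible N f) (ed : Fin p → E) (ℓw : Fin p → ℝ → ℝ)
    {θ1 θhat : ℝ} (hθ1 : 0 ≤ θ1)
    (haff : ∀ i, ∃ m c : ℝ, ∀ ζ ∈ Set.Ico θ1 θhat, ℓw i ζ = m * ζ + c)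
    (hpc : ∀ i, ∃ (n : ℕ) (t : ℕ → ℝ),
      t 0 = θ1 ∧ t n = θhat ∧ (∀ j, j < n → t j < t (j+1)) ∧
      ∀ j, j < n → ∀ ζ ∈ Set.Ico (t j) (t (j+1)), f.fplus (ed i) ζ = f.fplus (ed i) (t j))
    (i : Fin p) {θ : ℝ} (hθ : θ ∈ Ioo θ1 θhat) :
    ∃ δ am Mm Mp : ℝ, 0 < δ ∧ θ1 ≤ θ - δ ∧ θ + δ ≤ θhat ∧
      (∀ ζ ∈ Ioo (θ - δ) θ, f.fplus (ed i) ζ = am) ∧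
      (∀ ζ ∈ Ico θ (θ + δ), f.fplus (ed i) ζ = f.fplus (ed i) θ) ∧
      (∀ ζ ∈ Ioc (θ - δ) θ, hFun N f ed ℓw i ζ = hFun N f ed ℓw i θ + Mm * (ζ - θ)) ∧
      (∀ ζ ∈ Ico θ (θ + δ), hFun N f ed ℓw i ζ = hFun N f ed ℓw i θ + Mp * (ζ - θ)) ∧
      (am ≤ f.fplus (ed i) θ → Mm ≤ Mp) := by
  obtain ⟨n, t, ht0, htn, hinc, hpieces⟩ := hpc i
  obtain ⟨m, c, hmc⟩ := haff i
  obtain ⟨j, hj, hjl, hjr⟩ := find_piece n t θ (ht0 ▸ le_of_lt hθ.1) (htn ▸ hθ.2)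
  have ht0' : θ1 ≤ t j := ht0 ▸ t_mono hinc (Nat.zero_le j) (le_of_lt hj)
  have htn' : t (j+1) ≤ θhat := htn ▸ t_mono hinc hj (le_refl n)
  have hθ0 : (0:ℝ) ≤ θ := le_trans hθ1 (le_of_lt hθ.1)
  -- right constancy window
  have hRwin : ∃ δR, 0 < δR ∧ θ + δR ≤ θhat ∧
      ∀ ζ ∈ Ico θ (θ + δR), f.fplus (ed i) ζ = f.fplus (ed i) θ := by
    refine ⟨t (j+1) - θ, by linarith, by linarith, fun ζ hζ => ?_⟩
    rw [hpieces j hj ζ ⟨le_trans hjl hζ.1, by linarith [hζ.2]⟩,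
      ← hpieces j hj θ ⟨hjl, hjr⟩]
  -- left constancy window
  have hLwin : ∃ δL am, 0 < δL ∧ θ1 ≤ θ - δL ∧
      ∀ ζ ∈ Ioo (θ - δL) θ, f.fplus (ed i) ζ = am := by
    rcases lt_or_eq_of_le hjl with hlt | heq
    · refine ⟨θ - t j, f.fplus (ed i) θ, by linarith, by linarith, fun ζ hζ => ?_⟩
      rw [hpieces j hj ζ ⟨by linarith [hζ.1], by linarith [hζ.2]⟩,
        ← hpieces j hj θ ⟨hjl, hjr⟩]
    · have hj1 : 1 ≤ j := by
        by_contra h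
        push_neg at h
        interval_cases j
        rw [ht0] at heq
        exact absurd heq (ne_of_lt hθ.1)
      have hjm : j - 1 < n := by omega
      have hje : j - 1 + 1 = j := by omega
      refine ⟨θ - t (j-1), f.fplus (ed i) (t (j-1)), ?_, ?_, fun ζ hζ => ?_⟩
      · have := hinc (j-1) hjm
        rw [hje] at this
        linarith [heq ▸ this]
      · have : θ1 ≤ t (j-1) := ht0 ▸ t_mono hinc (Nat.zero_le _) (by omega)
        linarith
      · refine hpieces (j-1) hjm ζ ⟨by linarith [hζ.1], ?_⟩
        rw [hje, heq]
        exact hζ.2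
  obtain ⟨δR, hδR, hδRhat, hRconst⟩ := hRwin
  obtain ⟨δL, am, hδL, hδLhat, hLconst⟩ := hLwin
  -- queue behaviour
  obtain ⟨δ₂, sm, hδ₂, hδ₂l, hqL, hsmCase⟩ :=
    queue_left (ed i) hf (by linarith : (0:ℝ) ≤ θ - δL) (by linarith) hLconst
  obtain ⟨δ₃, sp, hδ₃, hδ₃r, hqR, hspCase⟩ := queue_right (ed i) hf hθ0 hδR hRconst
  set ν := N.cap (ed i) with hν
  have hν0 : 0 < ν := N.cap_pos (ed i)
  set δ := min δ₂ δ₃ with hδdef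
  have hδ0 : 0 < δ := lt_min hδ₂ hδ₃
  refine ⟨δ, am, sm / ν + m, sp / ν + m, hδ0, ?_, ?_, ?_, ?_, ?_, ?_, ?_⟩
  · have := min_le_left δ₂ δ₃; linarith
  · have := min_le_right δ₂ δ₃; linarith
  · intro ζ hζ
    exact hLconst ζ ⟨by
      have := min_le_left δ₂ δ₃; linarith [hζ.1], hζ.2⟩
  · intro ζ hζ
    exact hRconst ζ ⟨hζ.1, by
      have := min_le_right δ₂ δ₃; linarith [hζ.2]⟩
  · intro ζ hζ
    have hζmem : ζ ∈ Ioc (θ - δ₂) θ := ⟨by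
      have := min_le_left δ₂ δ₃; linarith [hζ.1], hζ.2⟩
    have hζI : ζ ∈ Ico θ1 θhat := by
      constructor
      · have := min_le_left δ₂ δ₃; linarith [hζ.1]
      · linarith [hζ.2, hθ.2]
    have hθI : θ ∈ Ico θ1 θhat := ⟨le_of_lt hθ.1, hθ.2⟩
    unfold hFun
    rw [hqL ζ hζmem, hmc ζ hζI, hmc θ hθI]
    rw [hν]
    ring
  · intro ζ hζ
    have hζmem : ζ ∈ Ico θ (θ + δ₃) := ⟨hζ.1, by
      have := min_le_right δ₂ δ₃; linarith [hζ.2]⟩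
    have hζI : ζ ∈ Ico θ1 θhat := by
      constructor
      · linarith [hζ.1, hθ.1]
      · have := min_le_right δ₂ δ₃; linarith [hζ.2]
    have hθI : θ ∈ Ico θ1 θhat := ⟨le_of_lt hθ.1, hθ.2⟩
    unfold hFun
    rw [hqR ζ hζmem, hmc ζ hζI, hmc θ hθI]
    rw [hν]
    ring
  · intro ham
    have hsmsp : sm ≤ sp := by
      rcases hsmCase with ⟨hq1, hsm⟩ | ⟨hq1, hsm⟩ <;>
        rcases hspCase with ⟨hq2, hsp⟩ | ⟨hq2, hsp⟩
      · rw [hsm, hsp]; linarith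
      · rw [hq2] at hq1; exact absurd hq1 (lt_irrefl 0)
      · rw [hq1] at hq2; exact absurd hq2 (lt_irrefl 0)
      · rw [hsp]; exact le_trans hsm (le_max_right _ _)
    have : sm / ν ≤ sp / ν := (div_le_div_iff_of_pos_right hν0).mpr hsmsp
    linarith

lemma iInf_fin_achieved {p : ℕ} (hp : 1 ≤ p) (u : Fin p → ℝ) :
    ∃ k, (⨅ i, u i) = u k ∧ ∀ i, u k ≤ u i := by
  haveI : Nonempty (Fin p) := ⟨⟨0, hp⟩⟩
  obtain ⟨k, -, hk⟩ := Finset.exists_min_image Finset.univ u Finset.univ_nonempty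
  refine ⟨k, le_antisymm (ciInf_le (Set.Finite.bddBelow (Set.finite_range u)) k)
    (le_ciInf fun i => hk i (Finset.mem_univ i)), fun i => hk i (Finset.mem_univ i)⟩

lemma lv_right {p : ℕ} (hp : 1 ≤ p) (h : Fin p → ℝ → ℝ) (M : Fin p → ℝ) {θ δ : ℝ}
    (hδ : 0 < δ)
    (hR : ∀ i, ∀ ζ ∈ Ico θ (θ + δ), h i ζ = h i θ + M i * (ζ - θ)) :
    ∃ δ' j₀, 0 < δ' ∧ δ' ≤ δ ∧ h j₀ θ = (⨅ i, h i θ) ∧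
      (∀ i, h i θ = (⨅ i, h i θ) → M j₀ ≤ M i) ∧
      ∀ ζ ∈ Ico θ (θ + δ'), (⨅ i, h i ζ) = h j₀ ζ := by
  haveI : Nonempty (Fin p) := ⟨⟨0, hp⟩⟩
  classical
  set lvθ := ⨅ i, h i θ with hlv
  obtain ⟨k, hk, hkall⟩ := iInf_fin_achieved hp (fun i => h i θ)
  set S : Finset (Fin p) := Finset.univ.filter (fun i => h i θ = lvθ) with hS
  have hkS : k ∈ S := by
    simp only [hS, Finset.mem_filter, Finset.mem_univ, true_and]
    exact hk.symm
  obtain ⟨j₀, hj₀S, hj₀min⟩ := Finset.exists_min_image S M ⟨k, hkS⟩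
  have hj₀θ : h j₀ θ = lvθ := by
    simpa only [hS, Finset.mem_filter, Finset.mem_univ, true_and] using hj₀S
  have hgap : ∀ i, h i θ ≠ lvθ → 0 < h i θ - lvθ := by
    intro i hi
    have : lvθ ≤ h i θ := le_trans (le_of_eq hk) (hkall i)
    cases lt_or_eq_of_le this with
    | inl hlt => linarith
    | inr heqq => exact absurd heqq.symm hi
  set B : Fin p → ℝ := fun i =>
    if h i θ = lvθ then δ else (h i θ - lvθ) / (|M i - M j₀| + 1) with hB
  have hBpos : ∀ i, 0 < B i := by
    intro i
    simp only [hB]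
    split
    · exact hδ
    · next hne => exact div_pos (hgap i hne) (by positivity)
  set δ' := min δ (Finset.univ.inf' Finset.univ_nonempty B) with hδ'
  have hδ'pos : 0 < δ' := lt_min hδ (by
    rw [Finset.lt_inf'_iff]
    exact fun i _ => hBpos i)
  refine ⟨δ', j₀, hδ'pos, min_le_left _ _, hj₀θ, ?_, ?_⟩
  · intro i hi
    exact hj₀min i (by
      simp only [hS, Finset.mem_filter, Finset.mem_univ, true_and]; exact hi)
  · intro ζ hζ
    have hζδ : ζ ∈ Ico θ (θ + δ) :=
      ⟨hζ.1, lt_of_lt_of_le hζ.2 (by linarith [min_le_left δ (Finset.univ.inf' Finset.univ_nonempty B)])⟩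
    have hζθ : 0 ≤ ζ - θ := by linarith [hζ.1]
    have hmain : ∀ i, h j₀ ζ ≤ h i ζ := by
      intro i
      rw [hR i ζ hζδ, hR j₀ ζ hζδ, hj₀θ]
      by_cases hi : h i θ = lvθ
      · have := hj₀min i (by
          simp only [hS, Finset.mem_filter, Finset.mem_univ, true_and]; exact hi)
        rw [hi]
        nlinarith
      · have hg := hgap i hi
        have hbi : ζ - θ < B i := by
          have h1 : δ' ≤ B i :=
            le_trans (min_le_right _ _) (Finset.inf'_le B (Finset.mem_univ i))
          linarith [hζ.2]
        have hBi : B i = (h i θ - lvθ) / (|M i - M j₀| + 1) := by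
          simp only [hB]; rw [if_neg hi]
        rw [hBi] at hbi
        have h2 : (ζ - θ) * (|M i - M j₀| + 1) < h i θ - lvθ :=
          (lt_div_iff₀ (by positivity)).mp hbi
        have h3 : -(M i - M j₀) ≤ |M i - M j₀| := neg_le_abs _
        have h4 : 0 ≤ |M i - M j₀| := abs_nonneg _
        nlinarith
    exact le_antisymm (ciInf_le (Set.Finite.bddBelow (Set.finite_range _)) j₀)
      (le_ciInf hmain)

lemma lv_left {p : ℕ} (hp : 1 ≤ p) (h : Fin p → ℝ → ℝ) (M : Fin p → ℝ) {θ δ : ℝ}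
    (hδ : 0 < δ)
    (hL : ∀ i, ∀ ζ ∈ Ioc (θ - δ) θ, h i ζ = h i θ + M i * (ζ - θ)) :
    ∃ δ' j₁, 0 < δ' ∧ δ' ≤ δ ∧ h j₁ θ = (⨅ i, h i θ) ∧
      ∀ ζ ∈ Ioc (θ - δ') θ, (⨅ i, h i ζ) = h j₁ ζ := by
  haveI : Nonempty (Fin p) := ⟨⟨0, hp⟩⟩
  classical
  set lvθ := ⨅ i, h i θ with hlv
  obtain ⟨k, hk, hkall⟩ := iInf_fin_achieved hp (fun i => h i θ)
  set S : Finset (Fin p) := Finset.univ.filter (fun i => h i θ = lvθ) with hS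
  have hkS : k ∈ S := by
    simp only [hS, Finset.mem_filter, Finset.mem_univ, true_and]
    exact hk.symm
  obtain ⟨j₁, hj₁S, hj₁max⟩ := Finset.exists_max_image S M ⟨k, hkS⟩
  have hj₁θ : h j₁ θ = lvθ := by
    simpa only [hS, Finset.mem_filter, Finset.mem_univ, true_and] using hj₁S
  have hgap : ∀ i, h i θ ≠ lvθ → 0 < h i θ - lvθ := by
    intro i hi
    have : lvθ ≤ h i θ := le_trans (le_of_eq hk) (hkall i)
    cases lt_or_eq_of_le this with
    | inl hlt => linarith
    | inr heqq => exact absurd heqq.symm hi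
  set B : Fin p → ℝ := fun i =>
    if h i θ = lvθ then δ else (h i θ - lvθ) / (|M i - M j₁| + 1) with hB
  have hBpos : ∀ i, 0 < B i := by
    intro i
    simp only [hB]
    split
    · exact hδ
    · next hne => exact div_pos (hgap i hne) (by positivity)
  set δ' := min δ (Finset.univ.inf' Finset.univ_nonempty B) with hδ'
  have hδ'pos : 0 < δ' := lt_min hδ (by
    rw [Finset.lt_inf'_iff]
    exact fun i _ => hBpos i)
  refine ⟨δ', j₁, hδ'pos, min_le_left _ _, hj₁θ, ?_⟩
  intro ζ hζ
  have hζδ : ζ ∈ Ioc (θ - δ) θ :=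
    ⟨lt_of_le_of_lt (by linarith [min_le_left δ (Finset.univ.inf' Finset.univ_nonempty B)]) hζ.1, hζ.2⟩
  have hζθ : ζ - θ ≤ 0 := by linarith [hζ.2]
  have hmain : ∀ i, h j₁ ζ ≤ h i ζ := by
    intro i
    rw [hL i ζ hζδ, hL j₁ ζ hζδ, hj₁θ]
    by_cases hi : h i θ = lvθ
    · have := hj₁max i (by
        simp only [hS, Finset.mem_filter, Finset.mem_univ, true_and]; exact hi)
      rw [hi]
      nlinarith
    · have hg := hgap i hi
      have hbi : θ - ζ < B i := by
        have h1 : δ' ≤ B i :=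
          le_trans (min_le_right _ _) (Finset.inf'_le B (Finset.mem_univ i))
        linarith [hζ.1]
      have hBi : B i = (h i θ - lvθ) / (|M i - M j₁| + 1) := by
        simp only [hB]; rw [if_neg hi]
      rw [hBi] at hbi
      have h2 : (θ - ζ) * (|M i - M j₁| + 1) < h i θ - lvθ :=
        (lt_div_iff₀ (by positivity)).mp hbi
      have h3 : (M i - M j₁) ≤ |M i - M j₁| := le_abs_self _
      have h4 : 0 ≤ |M i - M j₁| := abs_nonneg _
      nlinarith
  exact le_antisymm (ciInf_le (Set.Finite.bddBelow (Set.finite_range _)) j₁)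
    (le_ciInf hmain)

end QueueLemmas
/-- Let `v` be a node with outgoing edges `vw_1, …, vw_p` and `f` a
feasible flow such that on `[θ1, θ̂)` the total outflow from `v` is constant, each
`f⁺_{vw_i}` is right-constant and piecewise constant with finitely many pieces, each
`ℓ_{w_i}` is affine, and flow only enters edges minimizing `h_i`. Then the `h_i` and
`ℓ_v = min_i h_i` are continuous and piecewise linear on `[θ1, θ̂)` and possess one-sided
derivatives everywhere in `(θ1, θ̂)`; moreover, for every `θ ∈ (θ1, θ̂)`:
(1) `min{∂⁻h_i(θ) : i ∈ I(θ)} ≤ ∂⁺ℓ_v(θ)`; and (2) if every edge active immediately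
after `θ` was also active immediately before `θ`, then `∂⁻ℓ_v(θ) ≤ ∂⁺ℓ_v(θ)`. -/
theorem label_derivative_claims
    {V E : Type} [Fintype V] [DecidableEq V] [Fintype E] [DecidableEq E]
    (N : Network V E) (hbdd : N.BddInflow)
    (f : FlowOverTime N) (hf : Feasible N f)
    (v : V) (p : ℕ) (hp : 1 ≤ p)
    (ed : Fin p → E) (hed_tail : ∀ i, N.tail (ed i) = v)
    (hed_inj : Function.Injective ed) (hed_all : ∀ e, N.tail e = v → ∃ i, ed i = e)
    (ℓw : Fin p → ℝ → ℝ)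
    (θ1 θhat : ℝ) (hθ1 : 0 ≤ θ1) (hlt : θ1 < θhat)
    (haff : ∀ i, ∃ m c : ℝ, ∀ ζ ∈ Set.Ico θ1 θhat, ℓw i ζ = m * ζ + c)
    (htot : ∃ b : ℝ, ∀ ζ ∈ Set.Ico θ1 θhat, ∑ i : Fin p, f.fplus (ed i) ζ = b)
    (hpc : ∀ i, ∃ (n : ℕ) (t : ℕ → ℝ),
      t 0 = θ1 ∧ t n = θhat ∧ (∀ j, j < n → t j < t (j+1)) ∧
      ∀ j, j < n → ∀ ζ ∈ Set.Ico (t j) (t (j+1)), f.fplus (ed i) ζ = f.fplus (ed i) (t j))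
    (hmin : ∀ i, ∀ ζ ∈ Set.Ico θ1 θhat, 0 < f.fplus (ed i) ζ →
      hFun N f ed ℓw i ζ = lvFun N f ed ℓw ζ) :
    -- continuity on [θ1, θ̂)
    (∀ i, ContinuousOn (hFun N f ed ℓw i) (Set.Ico θ1 θhat)) ∧
    ContinuousOn (lvFun N f ed ℓw) (Set.Ico θ1 θhat) ∧
    -- piecewise linearity on [θ1, θ̂)
    (∀ i, ∃ (n : ℕ) (t : ℕ → ℝ),
      t 0 = θ1 ∧ t n = θhat ∧ (∀ j, j < n → t j < t (j+1)) ∧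
      ∀ j, j < n → ∃ m c : ℝ, ∀ ζ ∈ Set.Ico (t j) (t (j+1)),
        hFun N f ed ℓw i ζ = m * ζ + c) ∧
    (∃ (n : ℕ) (t : ℕ → ℝ),
      t 0 = θ1 ∧ t n = θhat ∧ (∀ j, j < n → t j < t (j+1)) ∧
      ∀ j, j < n → ∃ m c : ℝ, ∀ ζ ∈ Set.Ico (t j) (t (j+1)),
        lvFun N f ed ℓw ζ = m * ζ + c) ∧
    -- one-sided derivatives exist everywhere in (θ1, θ̂)
    (∀ θ ∈ Set.Ioo θ1 θhat,
      (∀ i, DifferentiableWithinAt ℝ (hFun N f ed ℓw i) (Set.Iic θ) θ ∧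
            DifferentiableWithinAt ℝ (hFun N f ed ℓw i) (Set.Ici θ) θ) ∧
      DifferentiableWithinAt ℝ (lvFun N f ed ℓw) (Set.Iic θ) θ ∧
      DifferentiableWithinAt ℝ (lvFun N f ed ℓw) (Set.Ici θ) θ) ∧
    -- claim (1)
    (∀ θ ∈ Set.Ioo θ1 θhat, ∃ i : Fin p,
      hFun N f ed ℓw i θ = lvFun N f ed ℓw θ ∧
      derivWithin (hFun N f ed ℓw i) (Set.Iic θ) θ
        ≤ derivWithin (lvFun N f ed ℓw) (Set.Ici θ) θ) ∧
    -- claim (2)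
    (∀ θ ∈ Set.Ioo θ1 θhat,
      (∀ i : Fin p, hFun N f ed ℓw i θ = lvFun N f ed ℓw θ →
        derivWithin (hFun N f ed ℓw i) (Set.Ici θ) θ
          = derivWithin (lvFun N f ed ℓw) (Set.Ici θ) θ →
        ∃ ε > 0, ∀ ζ ∈ Set.Ioo (θ - ε) θ, hFun N f ed ℓw i ζ = lvFun N f ed ℓw ζ) →
      derivWithin (lvFun N f ed ℓw) (Set.Iic θ) θ
        ≤ derivWithin (lvFun N f ed ℓw) (Set.Ici θ) θ) := by
  classical
  haveI : Nonempty (Fin p) := ⟨⟨0, hp⟩⟩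
  set h := hFun N f ed ℓw with hh
  set lv := lvFun N f ed ℓw with hlvdef
  have hlv_eq : ∀ ζ, lv ζ = ⨅ i, h i ζ := fun ζ => rfl
  have hνpos : ∀ i, 0 < N.cap (ed i) := fun i => N.cap_pos (ed i)
  -- continuity of each h i
  have hcont : ∀ i, ContinuousOn (h i) (Set.Ico θ1 θhat) := by
    intro i
    obtain ⟨m, c, hmc⟩ := haff i
    have h1 : ContinuousOn (fun ζ => N.time (ed i) +
        queueOf N f.fplus f.fminus (ed i) ζ / N.cap (ed i)) (Set.Ico θ1 θhat) :=
      continuousOn_const.add ((queue_continuous (ed i)).continuousOn.div_const _)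
    have h2 : ContinuousOn (ℓw i) (Set.Ico θ1 θhat) := by
      refine ContinuousOn.congr (f := fun ζ => m * ζ + c) ?_ (fun ζ hζ => hmc ζ hζ)
      exact ((continuous_const.mul continuous_id).add continuous_const).continuousOn
    exact h1.add h2
  -- continuity of lv
  have hcontlv : ContinuousOn lv (Set.Ico θ1 θhat) := by
    have := pred_iInf_fin (fun g => ContinuousOn g (Set.Ico θ1 θhat))
      (fun g g' he hg => by rwa [show g' = g from funext fun ζ => (he ζ).symm])
      (fun g g' hg hg' => fun x hx => (hg x hx).min (hg' x hx)) p hp (fun i => h i) hcont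
    exact this
  -- piecewise linearity of each h i
  have hpw : ∀ i, PW (h i) θ1 θhat := by
    intro i
    obtain ⟨m, c, hmc⟩ := haff i
    obtain ⟨n, t, ht0, htn, hinc, hpieces⟩ := hpc i
    have hres := pw_concat_fin (g := h i) n t hinc ?_
    · rwa [ht0, htn] at hres
    intro j hj
    have ht0' : θ1 ≤ t j := ht0 ▸ t_mono hinc (Nat.zero_le j) (le_of_lt hj)
    have htn' : t (j+1) ≤ θhat := htn ▸ t_mono hinc hj (le_refl n)
    have h0j : (0:ℝ) ≤ t j := le_trans hθ1 ht0'
    have hν0 : 0 < N.cap (ed i) := hνpos i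
    set ν := N.cap (ed i) with hνdef
    set a := f.fplus (ed i) (t j) with hadef
    set qj := queueOf N f.fplus f.fminus (ed i) (t j) with hqjdef
    have hform : ∀ ζ ∈ Ico (t j) (t (j+1)), queueOf N f.fplus f.fminus (ed i) ζ =
        max (qj + (a - ν) * (ζ - t j)) 0 := by
      intro ζ hζ
      exact queue_formula (ed i) hf h0j hζ.1
        (fun s hs => hpieces j hj s ⟨hs.1, lt_of_lt_of_le hs.2 (le_of_lt hζ.2)⟩)
    have hmax : ∀ ζ ∈ Ico (t j) (t (j+1)),
        max (((a - ν)/ν + m) * ζ + (N.time (ed i) + (qj - (a - ν) * t j)/ν + c))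
          (m * ζ + (N.time (ed i) + c)) = h i ζ := by
      intro ζ hζ
      have hζI : ζ ∈ Set.Ico θ1 θhat := ⟨le_trans ht0' hζ.1, lt_of_lt_of_le hζ.2 htn'⟩
      show _ = hFun N f ed ℓw i ζ
      unfold hFun
      rw [hform ζ hζ, hmc ζ hζI]
      have key : ((a - ν)/ν + m) * ζ + (N.time (ed i) + (qj - (a - ν) * t j)/ν + c) =
          (N.time (ed i) + (qj + (a - ν) * (ζ - t j)) / ν + (m * ζ + c)) := by
        field_simp
        ring
      rcases le_total (qj + (a - ν) * (ζ - t j)) 0 with hc | hc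
      · have hdiv : (qj + (a - ν) * (ζ - t j)) / ν ≤ 0 :=
          div_nonpos_of_nonpos_of_nonneg hc (le_of_lt hν0)
        have hle : ((a - ν)/ν + m) * ζ + (N.time (ed i) + (qj - (a - ν) * t j)/ν + c) ≤
            m * ζ + (N.time (ed i) + c) := by
          rw [key]; linarith
        rw [max_eq_right hc, max_eq_right hle, zero_div]
        ring
      · have hdiv : 0 ≤ (qj + (a - ν) * (ζ - t j)) / ν :=
          div_nonneg hc (le_of_lt hν0)
        have hge : m * ζ + (N.time (ed i) + c) ≤
            ((a - ν)/ν + m) * ζ + (N.time (ed i) + (qj - (a - ν) * t j)/ν + c) := by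
          rw [key]; linarith
        rw [max_eq_left hc, max_eq_left hge]
        exact key
    exact pw_congr hmax (pw_max_aff_aff (hinc j hj) (fun ζ _ => rfl) (fun ζ _ => rfl))
  -- piecewise linearity of lv
  have hpwlv : PW lv θ1 θhat := by
    have := pred_iInf_fin (fun g => PW g θ1 θhat)
      (fun g g' he hg => by rwa [show g' = g from funext fun ζ => (he ζ).symm])
      (fun g g' hg hg' => pw_min hg hg') p hp (fun i => h i) hpw
    exact this
  -- the local analysis at a point θ
  have main : ∀ θ ∈ Set.Ioo θ1 θhat,
      ((∀ i, DifferentiableWithinAt ℝ (h i) (Set.Iic θ) θ ∧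
            DifferentiableWithinAt ℝ (h i) (Set.Ici θ) θ) ∧
      DifferentiableWithinAt ℝ lv (Set.Iic θ) θ ∧
      DifferentiableWithinAt ℝ lv (Set.Ici θ) θ) ∧
      (∃ i : Fin p, h i θ = lv θ ∧
        derivWithin (h i) (Set.Iic θ) θ ≤ derivWithin lv (Set.Ici θ) θ) ∧
      ((∀ i : Fin p, h i θ = lv θ →
          derivWithin (h i) (Set.Ici θ) θ = derivWithin lv (Set.Ici θ) θ →
          ∃ ε > 0, ∀ ζ ∈ Set.Ioo (θ - ε) θ, h i ζ = lv ζ) →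
        derivWithin lv (Set.Iic θ) θ ≤ derivWithin lv (Set.Ici θ) θ) := by
    intro θ hθ
    obtain ⟨b, hb⟩ := htot
    choose δe am Mm Mp hδ0 hδl hδr hcL hcR hrL hrR hcomp using
      fun i => edge_local hf ed ℓw hθ1 haff hpc i hθ
    rw [← hh] at hrL hrR
    set δc := Finset.univ.inf' Finset.univ_nonempty δe with hδc
    have hδc0 : 0 < δc := by
      rw [hδc, Finset.lt_inf'_iff]
      exact fun i _ => hδ0 i
    have hδci : ∀ i, δc ≤ δe i := fun i => Finset.inf'_le _ (Finset.mem_univ i)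
    have hrL' : ∀ i, ∀ ζ ∈ Ioc (θ - δc) θ, h i ζ = h i θ + Mm i * (ζ - θ) :=
      fun i ζ hζ => hrL i ζ ⟨by linarith [hδci i, hζ.1], hζ.2⟩
    have hrR' : ∀ i, ∀ ζ ∈ Ico θ (θ + δc), h i ζ = h i θ + Mp i * (ζ - θ) :=
      fun i ζ hζ => hrR i ζ ⟨hζ.1, by linarith [hδci i, hζ.2]⟩
    obtain ⟨δr, j₀, hδr0, hδrle, hj₀θ, hj₀min, hlvR⟩ :=
      lv_right hp (fun i => h i) Mp hδc0 hrR'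
    obtain ⟨δl, j₁, hδl0, hδlle, hj₁θ, hlvL⟩ :=
      lv_left hp (fun i => h i) Mm hδc0 hrL'
    -- one-sided derivatives of the h i
    have hdL : ∀ i, HasDerivWithinAt (h i) (Mm i) (Set.Iic θ) θ ∧
        derivWithin (h i) (Set.Iic θ) θ = Mm i := by
      intro i
      refine affine_deriv_left (hδ0 i) (m := Mm i) (c := h i θ - Mm i * θ)
        (fun ζ hζ => ?_)
      rw [hrL i ζ hζ]; ring
    have hdR : ∀ i, HasDerivWithinAt (h i) (Mp i) (Set.Ici θ) θ ∧
        derivWithin (h i) (Set.Ici θ) θ = Mp i := by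
      intro i
      refine affine_deriv_right (hδ0 i) (m := Mp i) (c := h i θ - Mp i * θ)
        (fun ζ hζ => ?_)
      rw [hrR i ζ hζ]; ring
    -- one-sided derivatives of lv
    have hlvrepR : ∀ ζ ∈ Ico θ (θ + δr), lv ζ = Mp j₀ * ζ + (lv θ - Mp j₀ * θ) := by
      intro ζ hζ
      rw [hlv_eq ζ, hlvR ζ hζ,
        hrR' j₀ ζ ⟨hζ.1, lt_of_lt_of_le hζ.2 (by linarith [hδrle])⟩, hj₀θ, ← hlv_eq θ]
      ring
    have hlvrepL : ∀ ζ ∈ Ioc (θ - δl) θ, lv ζ = Mm j₁ * ζ + (lv θ - Mm j₁ * θ) := by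
      intro ζ hζ
      rw [hlv_eq ζ, hlvL ζ hζ,
        hrL' j₁ ζ ⟨lt_of_le_of_lt (by linarith [hδlle]) hζ.1, hζ.2⟩, hj₁θ, ← hlv_eq θ]
      ring
    have hdlvR := affine_deriv_right hδr0 hlvrepR
    have hdlvL := affine_deriv_left hδl0 hlvrepL
    -- key fact: edges with positive inflow at θ are "active just after θ"
    have hJ : ∀ i, 0 < f.fplus (ed i) θ →
        h i θ = lv θ ∧ derivWithin (h i) (Set.Ici θ) θ = derivWithin lv (Set.Ici θ) θ := by
      intro i hpos
      have heq : ∀ ζ ∈ Ico θ (θ + min δr δc), h i ζ = lv ζ := by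
        intro ζ hζ
        have hζc : ζ < θ + δc := lt_of_lt_of_le hζ.2 (by
          have := min_le_right δr δc; linarith)
        have hfζ : f.fplus (ed i) ζ = f.fplus (ed i) θ :=
          hcR i ζ ⟨hζ.1, by linarith [hδci i]⟩
        exact hmin i ζ ⟨by linarith [hζ.1, hθ.1],
          by linarith [hδr i, hδci i]⟩ (by rw [hfζ]; exact hpos)
      have hδm0 : 0 < min δr δc := lt_min hδr0 hδc0
      have hiθ : h i θ = lv θ := heq θ ⟨le_refl θ, by linarith⟩
      have hslope : Mp i = Mp j₀ := by
        have hζm : θ + min δr δc / 2 ∈ Ico θ (θ + min δr δc) :=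
          ⟨by linarith, by linarith⟩
        have e1 := heq _ hζm
        have e2 := hrR' i _ ⟨hζm.1, by
          have := min_le_right δr δc; linarith [hζm.2]⟩
        have e3 := hlvrepR _ ⟨hζm.1, by
          have := min_le_left δr δc; linarith [hζm.2]⟩
        rw [e2, e3, hiθ] at e1
        have : Mp i * (min δr δc / 2) = Mp j₀ * (min δr δc / 2) := by linarith [e1]
        have hne : (min δr δc / 2) ≠ 0 := by positivity
        exact mul_right_cancel₀ hne this
      exact ⟨hiθ, by rw [(hdR i).2, hslope, hdlvR.2]⟩
    -- the core counting argument
    have hamnn : ∀ i, 0 ≤ am i := by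
      intro i
      have := hcL i (θ - δc/2) ⟨by linarith [hδci i], by linarith⟩
      rw [← this]
      exact f.fplus_nonneg _ _
    have hζ₀I : θ - δc/2 ∈ Set.Ico θ1 θhat :=
      ⟨by linarith [hδl j₀, hδci j₀], by linarith [hθ.2]⟩
    have hsumL : ∑ i, am i = b := by
      rw [← hb (θ - δc/2) hζ₀I]
      exact Finset.sum_congr rfl (fun i _ =>
        (hcL i (θ - δc/2) ⟨by linarith [hδci i], by linarith⟩).symm)
    have hsumR : ∑ i, f.fplus (ed i) θ = b := hb θ ⟨le_of_lt hθ.1, hθ.2⟩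
    have hcore : ∃ i, (h i θ = lv θ ∧
        derivWithin (h i) (Set.Ici θ) θ = derivWithin lv (Set.Ici θ) θ) ∧
        am i ≤ f.fplus (ed i) θ := by
      by_contra hcon
      push_neg at hcon
      set Jf : Finset (Fin p) := Finset.univ.filter (fun i => h i θ = lv θ ∧
        derivWithin (h i) (Set.Ici θ) θ = derivWithin lv (Set.Ici θ) θ) with hJf
      have hj₀J : j₀ ∈ Jf := by
        simp only [hJf, Finset.mem_filter, Finset.mem_univ, true_and]
        exact ⟨hj₀θ, by rw [(hdR j₀).2, hdlvR.2]⟩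
      have h1 : ∑ i ∈ Jf, f.fplus (ed i) θ = b := by
        rw [← hsumR]
        refine Finset.sum_subset (Finset.subset_univ Jf) ?_
        intro i _ hiJ
        by_contra hne
        have hpos : 0 < f.fplus (ed i) θ :=
          lt_of_le_of_ne (f.fplus_nonneg _ _) (Ne.symm hne)
        exact hiJ (by
          simp only [hJf, Finset.mem_filter, Finset.mem_univ, true_and]
          exact hJ i hpos)
      have h2 : ∑ i ∈ Jf, f.fplus (ed i) θ < ∑ i ∈ Jf, am i := by
        apply Finset.sum_lt_sum_of_nonempty ⟨j₀, hj₀J⟩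
        intro i hi
        simp only [hJf, Finset.mem_filter, Finset.mem_univ, true_and] at hi
        exact hcon i hi
      have h3 : ∑ i ∈ Jf, am i ≤ ∑ i, am i :=
        Finset.sum_le_sum_of_subset_of_nonneg (Finset.subset_univ _)
          (fun i _ _ => hamnn i)
      linarith [h1, h2, h3, hsumL]
    obtain ⟨j, ⟨hjθ, hjdrw⟩, hjflow⟩ := hcore
    have hMj : Mm j ≤ Mp j := hcomp j hjflow
    refine ⟨⟨fun i => ⟨(hdL i).1.differentiableWithinAt, (hdR i).1.differentiableWithinAt⟩,
      hdlvL.1.differentiableWithinAt, hdlvR.1.differentiableWithinAt⟩, ?_, ?_⟩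
    · -- claim 1
      refine ⟨j, hjθ, ?_⟩
      rw [(hdL j).2, ← hjdrw, (hdR j).2]
      exact hMj
    · -- claim 2
      intro H
      obtain ⟨ε, hε0, hεeq⟩ := H j hjθ hjdrw
      have hlvrepL2 : ∀ ζ ∈ Ioc (θ - min ε δc) θ, lv ζ = Mm j * ζ + (lv θ - Mm j * θ) := by
        intro ζ hζ
        rcases lt_or_eq_of_le hζ.2 with hlt | heqζ
        · have hζm : ζ ∈ Set.Ioo (θ - ε) θ :=
            ⟨lt_of_le_of_lt (by linarith [min_le_left ε δc]) hζ.1, hlt⟩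
          rw [← hεeq ζ hζm, hrL' j ζ ⟨lt_of_le_of_lt (by
            linarith [min_le_right ε δc]) hζ.1, hζ.2⟩, hjθ]
          ring
        · rw [heqζ, hjθ] at *
          rw [heqζ]
          ring
      have hd2 := affine_deriv_left (lt_min hε0 hδc0) hlvrepL2
      rw [hd2.2, ← hjdrw, (hdR j).2]
      exact hMj
  refine ⟨hcont, hcontlv, hpw, hpwlv, fun θ hθ => (main θ hθ).1,
    fun θ hθ => (main θ hθ).2.1, fun θ hθ => (main θ hθ).2.2⟩
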